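/- Let $t \ge 2n$ and let $\mathcal{F}$ be a collection of $n$ independent $n$-sets of the cycle $C_t$ (vertices labeled by $\mathbb{Z}_t$) such that $(\mathcal{F}, C_t)$ has no rainbow independent $n$-set. If some vertex $i$ lies in exactly one member $I$ of $\mathcal{F}$, then both $i-2$ and $i+2$ (indices mod $t$) belong to $I$. -/

import Mathlib

open Finset

/-- A set of vertices is independent: no two of its members are adjacent. -/
def IsIndep {V : Type*} (G : SimpleGraph V) (S : Set V) : Prop :=
  ∀ a ∈ S, ∀ b ∈ S, ¬ G.Adj a b

/-- `(F, G)` admits a rainbow independent `m`-set: `m` distinct vertices chosen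
from `m` distinct members of `F` (one vertex per member) forming an independent set. -/
def RainbowIndep {V : Type*} [DecidableEq V] (G : SimpleGraph V) {k : ℕ}
    (F : Fin k → Finset V) (m : ℕ) : Prop :=
  ∃ (s : Finset (Fin k)) (x : Fin k → V),
    s.card = m ∧ (∀ i ∈ s, x i ∈ F i) ∧ (s.image x).card = m ∧
    IsIndep G (s.image x : Set V)

/-- The cycle `C_t` with vertex set `ZMod t`, consecutive residues adjacent. -/
def cyc (t : ℕ) : SimpleGraph (ZMod t) :=
  SimpleGraph.fromRel (fun a b => b = a + 1)

lemma cyc_adj {t : ℕ} (a b : ZMod t) :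
    (cyc t).Adj a b ↔ a ≠ b ∧ (b = a + 1 ∨ a = b + 1) := SimpleGraph.fromRel_adj _ a b


lemma pathA {ι : Type*} [DecidableEq ι] :
    ∀ (k : ℕ) (s : Finset ι) (S : ι → Finset ℤ), s.card = k →
    (∀ j ∈ s, s.card ≤ (S j).card) →
    (∀ j ∈ s, ∀ a ∈ S j, a + 1 ∉ S j) →
    ∃ x : ι → ℤ, (∀ j ∈ s, x j ∈ S j) ∧ Set.InjOn x s ∧
      (∀ j ∈ s, ∀ j' ∈ s, x j ≠ x j' + 1) := by
  intro k
  induction k with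
  | zero =>
    intro s S hcard _ _
    rw [Finset.card_eq_zero] at hcard
    subst hcard
    exact ⟨fun _ => 0, by simp, by simp, by simp⟩
  | succ k ih =>
    intro s S hcard hsize hind
    have hsne : s.Nonempty := Finset.card_pos.mp (by omega)
    have hUne : (s.biUnion S).Nonempty := by
      obtain ⟨j, hj⟩ := hsne
      have h1 : (S j).Nonempty := Finset.card_pos.mp (by have := hsize j hj; omega)
      obtain ⟨a, ha⟩ := h1
      exact ⟨a, Finset.mem_biUnion.mpr ⟨j, hj, ha⟩⟩
    set m := (s.biUnion S).min' hUne with hm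
    obtain ⟨j₀, hj₀, hmj₀⟩ := Finset.mem_biUnion.mp ((s.biUnion S).min'_mem hUne)
    have hmin : ∀ j ∈ s, ∀ a ∈ S j, m ≤ a := fun j hj a ha =>
      Finset.min'_le _ _ (Finset.mem_biUnion.mpr ⟨j, hj, ha⟩)
    set s' := s.erase j₀ with hs'
    set S' : ι → Finset ℤ := fun j => ((S j).erase m).erase (m+1) with hS'
    have hcard' : s'.card = k := by
      rw [hs', Finset.card_erase_of_mem hj₀, hcard]; omega
    have hsub : ∀ j, S' j ⊆ S j := fun j =>
      (Finset.erase_subset _ _).trans (Finset.erase_subset _ _)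
    have hsize' : ∀ j ∈ s', s'.card ≤ (S' j).card := by
      intro j hj
      have hjs : j ∈ s := Finset.mem_of_mem_erase hj
      have h1 : k + 1 ≤ (S j).card := by rw [← hcard]; exact hsize j hjs
      rw [hcard']
      by_cases hm1 : m ∈ S j
      · have hm2 : m + 1 ∉ S j := hind j hjs m hm1
        have e1 : ((S j).erase m).card = (S j).card - 1 := Finset.card_erase_of_mem hm1
        have e2 : (S' j) = (S j).erase m := by
          rw [hS']
          exact Finset.erase_eq_of_notMem (fun h => hm2 (Finset.mem_of_mem_erase h))
        rw [e2, e1]; omega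
      · have e2 : ((S j).erase m) = S j := Finset.erase_eq_of_notMem hm1
        have : (S' j).card ≥ (S j).card - 1 := by
          rw [hS']; simp only [e2]
          exact le_trans (by omega) (Finset.pred_card_le_card_erase)
        omega
    have hind' : ∀ j ∈ s', ∀ a ∈ S' j, a + 1 ∉ S' j := fun j hj a ha h =>
      hind j (Finset.mem_of_mem_erase hj) a (hsub j ha) (hsub j h)
    obtain ⟨x', hx'mem, hx'inj, hx'adj⟩ := ih s' S' hcard' hsize' hind'
    have hup : ∀ b, Function.update x' j₀ m b = if b = j₀ then m else x' b :=
      fun b => Function.update_apply x' j₀ m b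
    refine ⟨Function.update x' j₀ m, ?_, ?_, ?_⟩
    · intro j hj
      rw [hup]
      split_ifs with h
      · rw [h]; exact hmj₀
      · exact hsub j (hx'mem j (Finset.mem_erase.mpr ⟨h, hj⟩))
    · intro a ha b hb hab
      simp only [Finset.mem_coe] at ha hb
      rw [hup, hup] at hab
      split_ifs at hab with h1 h2 h2
      · rw [h1, h2]
      · exfalso
        have hbmem : x' b ∈ S' b := hx'mem b (Finset.mem_erase.mpr ⟨h2, hb⟩)
        exact (Finset.ne_of_mem_erase (Finset.mem_of_mem_erase hbmem)) hab.symm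
      · exfalso
        have hamem : x' a ∈ S' a := hx'mem a (Finset.mem_erase.mpr ⟨h1, ha⟩)
        exact (Finset.ne_of_mem_erase (Finset.mem_of_mem_erase hamem)) hab
      · exact hx'inj (Finset.mem_coe.mpr (Finset.mem_erase.mpr ⟨h1, ha⟩))
          (Finset.mem_coe.mpr (Finset.mem_erase.mpr ⟨h2, hb⟩)) hab
    · intro j hj j' hj'
      rw [hup, hup]
      split_ifs with h1 h2 h2
      · omega
      · have h3 : x' j' ∈ S' j' := hx'mem j' (Finset.mem_erase.mpr ⟨h2, hj'⟩)
        have h4 : m ≤ x' j' := hmin j' hj' _ (hsub j' h3)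
        omega
      · have h3 : x' j ∈ S' j := hx'mem j (Finset.mem_erase.mpr ⟨h1, hj⟩)
        exact Finset.ne_of_mem_erase h3
      · exact hx'adj j (Finset.mem_erase.mpr ⟨h1, hj⟩) j' (Finset.mem_erase.mpr ⟨h2, hj'⟩)

lemma cutLemma {n t : ℕ} (ht : 2 ≤ t) (c : ZMod t) (s : Finset (Fin n))
    (S : Fin n → Finset (ZMod t))
    (hc : ∀ j ∈ s, c ∉ S j)
    (hsize : ∀ j ∈ s, s.card ≤ (S j).card)
    (hind : ∀ j ∈ s, IsIndep (cyc t) (S j : Set (ZMod t))) :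
    ∃ x : Fin n → ZMod t, (∀ j ∈ s, x j ∈ S j) ∧ Set.InjOn x s ∧
      (∀ j ∈ s, ∀ j' ∈ s, ¬ (cyc t).Adj (x j) (x j')) := by
  haveI : NeZero t := ⟨by omega⟩
  haveI : Fact (1 < t) := ⟨by omega⟩
  set ℓ : ZMod t → ℤ := fun z => ((z - c).val : ℤ) with hℓ
  have hℓinj : Function.Injective ℓ := by
    intro a b hab
    have h1 : (a - c).val = (b - c).val := by
      simp only [hℓ] at hab; exact_mod_cast hab
    have h2 : a - c = b - c := by
      have := congrArg (fun (v : ℕ) => (v : ZMod t)) h1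
      simpa [ZMod.natCast_rightInverse _] using this
    exact sub_left_injective h2
  set L : Fin n → Finset ℤ := fun j => (S j).image ℓ with hL
  have hLcard : ∀ j, (L j).card = (S j).card := fun j =>
    Finset.card_image_of_injective _ hℓinj
  -- step-up lemma: if ℓ z' = ℓ z + 1 with z, z' ≠ c then z' = z + 1
  have hstep : ∀ z z' : ZMod t, z ∈ s.biUnion S → z' ∈ s.biUnion S →
      ℓ z' = ℓ z + 1 → z' = z + 1 := by
    intro z z' hz hz' h
    have h1 : (z' - c).val = (z - c).val + 1 := by
      simp only [hℓ] at h; exact_mod_cast h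
    have h2 : z' - c = (z - c) + 1 := by
      have := congrArg (fun (v : ℕ) => (v : ZMod t)) h1
      simpa [ZMod.natCast_rightInverse _] using this
    linear_combination h2
  have hLind : ∀ j ∈ s, ∀ a ∈ L j, a + 1 ∉ L j := by
    intro j hj a ha h
    obtain ⟨z, hz, rfl⟩ := Finset.mem_image.mp ha
    obtain ⟨z', hz', hz'e⟩ := Finset.mem_image.mp h
    have hzz : z' = z + 1 := hstep z z' (Finset.mem_biUnion.mpr ⟨j, hj, hz⟩)
      (Finset.mem_biUnion.mpr ⟨j, hj, hz'⟩) hz'e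
    have hne : z ≠ z' := by
      intro h'
      rw [← h'] at hzz
      have : (1 : ZMod t) = 0 := by linear_combination -hzz
      exact one_ne_zero this
    exact hind j hj z (by exact_mod_cast hz) z' (by exact_mod_cast hz')
      ((cyc_adj z z').mpr ⟨hne, Or.inl hzz⟩)
  obtain ⟨ξ, hξmem, hξinj, hξadj⟩ := pathA s.card s L rfl
    (fun j hj => by rw [hLcard]; exact hsize j hj) hLind
  -- recover x
  have hrec : ∀ j ∈ s, ∃ z ∈ S j, ℓ z = ξ j := by
    intro j hj
    obtain ⟨z, hz, hze⟩ := Finset.mem_image.mp (hξmem j hj)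
    exact ⟨z, hz, hze⟩
  choose! x hxmem hxℓ using hrec
  refine ⟨x, hxmem, ?_, ?_⟩
  · intro a ha b hb hab
    simp only [Finset.mem_coe] at ha hb
    exact hξinj ha hb (by rw [← hxℓ a ha, ← hxℓ b hb, hab])
  · intro j hj j' hj' hadj
    rw [cyc_adj] at hadj
    obtain ⟨hne, h | h⟩ := hadj
    · -- x j' = x j + 1 : then ℓ (x j') = ℓ (x j) + 1 unless x j - c = -1
      have hval : (x j - c).val < t := ZMod.val_lt _
      have hvne : (x j' - c).val ≠ 0 := by
        rw [Ne, ZMod.val_eq_zero, sub_eq_zero]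
        intro h'; exact hc j' hj' (h' ▸ hxmem j' hj')
      by_cases hlast : (x j - c).val = t - 1
      · -- x j' - c = 0, contradiction
        apply hvne
        have h0 : x j' - c = ((((x j - c).val + 1 : ℕ)) : ZMod t) := by
          push_cast [ZMod.natCast_rightInverse _]
          linear_combination h
        rw [hlast] at h0
        have ht1 : (t - 1 + 1 : ℕ) = t := by omega
        rw [ht1, ZMod.natCast_self] at h0
        rw [ZMod.val_eq_zero]; exact h0
      · have h0 : x j' - c = ((((x j - c).val + 1 : ℕ)) : ZMod t) := by
          push_cast [ZMod.natCast_rightInverse _]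
          linear_combination h
        have h1 : (x j' - c).val = (x j - c).val + 1 := by
          rw [h0, ZMod.val_cast_of_lt (by omega)]
        have : ℓ (x j') = ℓ (x j) + 1 := by rw [hℓ]; push_cast [h1]; ring
        rw [hxℓ j hj, hxℓ j' hj'] at this
        exact hξadj j' hj' j hj this
    · have hval : (x j' - c).val < t := ZMod.val_lt _
      have hvne : (x j - c).val ≠ 0 := by
        rw [Ne, ZMod.val_eq_zero, sub_eq_zero]
        intro h'; exact hc j hj (h' ▸ hxmem j hj)
      by_cases hlast : (x j' - c).val = t - 1
      · apply hvne
        have h0 : x j - c = ((((x j' - c).val + 1 : ℕ)) : ZMod t) := by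
          push_cast [ZMod.natCast_rightInverse _]
          linear_combination h
        rw [hlast] at h0
        have ht1 : (t - 1 + 1 : ℕ) = t := by omega
        rw [ht1, ZMod.natCast_self] at h0
        rw [ZMod.val_eq_zero]; exact h0
      · have h0 : x j - c = ((((x j' - c).val + 1 : ℕ)) : ZMod t) := by
          push_cast [ZMod.natCast_rightInverse _]
          linear_combination h
        have h1 : (x j - c).val = (x j' - c).val + 1 := by
          rw [h0, ZMod.val_cast_of_lt (by omega)]
        have : ℓ (x j) = ℓ (x j') + 1 := by rw [hℓ]; push_cast [h1]; ring
        rw [hxℓ j hj, hxℓ j' hj'] at this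
        exact hξadj j hj j' hj' this

lemma rainbow_of_choice {t n : ℕ} (s : Finset (Fin n)) (x : Fin n → ZMod t)
    (F : Fin n → Finset (ZMod t))
    (hmem : ∀ j ∈ s, x j ∈ F j) (hinj : Set.InjOn x s)
    (hadj : ∀ j ∈ s, ∀ j' ∈ s, ¬ (cyc t).Adj (x j) (x j')) :
    RainbowIndep (cyc t) F s.card := by
  refine ⟨s, x, rfl, hmem, Finset.card_image_of_injOn hinj, ?_⟩
  intro a ha b hb
  simp only [Finset.coe_image, Set.mem_image, Finset.mem_coe] at ha hb
  obtain ⟨j, hj, rfl⟩ := ha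
  obtain ⟨j', hj', rfl⟩ := hb
  exact hadj j hj j' hj'

lemma main_plus (n t : ℕ) (ht : 2 * n ≤ t)
    (F : Fin n → Finset (ZMod t))
    (hF : ∀ i, (F i).card = n ∧ IsIndep (cyc t) (F i : Set (ZMod t)))
    (hno : ¬ RainbowIndep (cyc t) F n)
    (i : ZMod t) (i₀ : Fin n) (huniq : ∀ j, i ∈ F j ↔ j = i₀) :
    i + 2 ∈ F i₀ := by
  by_contra hv2
  have hn : 0 < n := i₀.pos
  have ht2 : 2 ≤ t := by omega
  haveI : Fact (1 < t) := ⟨by omega⟩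
  have hone : (1 : ZMod t) ≠ 0 := one_ne_zero
  have hiI : i ∈ F i₀ := (huniq i₀).mpr rfl
  have hne1 : ∀ a : ZMod t, a ≠ a + 1 := by
    intro a h
    apply hone
    linear_combination -h
  have hadj1 : ∀ a : ZMod t, (cyc t).Adj a (a + 1) :=
    fun a => (cyc_adj _ _).mpr ⟨hne1 a, Or.inl rfl⟩
  have hi1 : i + 1 ∉ F i₀ := fun h => (hF i₀).2 i hiI (i+1) h (hadj1 i)
  by_cases hcov : ∃ j, i + 1 ∈ F j
  · obtain ⟨j, hj⟩ := hcov
    have hji₀ : j ≠ i₀ := fun h => hi1 (h ▸ hj)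
    set s : Finset (Fin n) := Finset.univ.erase j with hs
    set S : Fin n → Finset (ZMod t) :=
      fun k => (((F k).erase i).erase (i+1)).erase (i+2) with hS
    have hsub : ∀ k, S k ⊆ F k := fun k =>
      ((Finset.erase_subset _ _).trans (Finset.erase_subset _ _)).trans
        (Finset.erase_subset _ _)
    have hscard : s.card = n - 1 := by
      rw [hs, Finset.card_erase_of_mem (Finset.mem_univ j), Finset.card_univ,
        Fintype.card_fin]
    have hsize : ∀ k ∈ s, s.card ≤ (S k).card := by
      intro k hk
      rw [hscard]
      by_cases hki : k = i₀
      · subst hki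
        have e1 : ((F k).erase i).card = n - 1 := by
          rw [Finset.card_erase_of_mem hiI, (hF k).1]
        have e2 : ((F k).erase i).erase (i+1) = (F k).erase i :=
          Finset.erase_eq_of_notMem (fun h => hi1 (Finset.mem_of_mem_erase h))
        have e3 : S k = (F k).erase i := by
          rw [hS]; simp only [e2]
          exact Finset.erase_eq_of_notMem
            (fun h => hv2 (Finset.mem_of_mem_erase h))
        rw [e3, e1]
      · have hvnot : i ∉ F k := fun h => hki ((huniq k).mp h)
        have e1 : (F k).erase i = F k := Finset.erase_eq_of_notMem hvnot
        have hnotboth : ¬ (i + 1 ∈ F k ∧ i + 2 ∈ F k) := by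
          rintro ⟨h1, h2⟩
          have : (cyc t).Adj (i+1) (i+2) := by
            have := hadj1 (i+1)
            rwa [show i + 1 + 1 = i + 2 by ring] at this
          exact (hF k).2 (i+1) h1 (i+2) h2 this
        by_cases h1 : i + 1 ∈ F k
        · have h2 : i + 2 ∉ F k := fun h => hnotboth ⟨h1, h⟩
          have e2 : (((F k).erase i).erase (i+1)).card = n - 1 := by
            rw [e1, Finset.card_erase_of_mem h1, (hF k).1]
          have e3 : S k = ((F k).erase i).erase (i+1) := by
            rw [hS]
            exact Finset.erase_eq_of_notMem
              (fun h => h2 (Finset.mem_of_mem_erase (Finset.mem_of_mem_erase h)))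
          rw [e3, e2]
        · have e2 : ((F k).erase i).erase (i+1) = F k := by
            rw [e1]; exact Finset.erase_eq_of_notMem h1
          have : (S k).card ≥ (F k).card - 1 := by
            rw [hS]; simp only [e2]
            exact Finset.pred_card_le_card_erase
          rw [(hF k).1] at this
          omega
    have hc : ∀ k ∈ s, (i + 1) ∉ S k := by
      intro k hk h
      exact Finset.ne_of_mem_erase (Finset.mem_of_mem_erase h) rfl
    have hind : ∀ k ∈ s, IsIndep (cyc t) (S k : Set (ZMod t)) := by
      intro k hk a ha b hb
      exact (hF k).2 a (hsub k (by exact_mod_cast ha)) b (hsub k (by exact_mod_cast hb))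
    obtain ⟨x, hxmem, hxinj, hxadj⟩ := cutLemma ht2 (i+1) s S hc hsize hind
    set X := Function.update x j (i + 1) with hX
    have hXup : ∀ b, X b = if b = j then i + 1 else x b :=
      fun b => Function.update_apply x j (i+1) b
    have hXs : ∀ k ∈ s, X k = x k := by
      intro k hk
      rw [hXup]
      exact if_neg (Finset.ne_of_mem_erase hk)
    have hXmem : ∀ k ∈ (Finset.univ : Finset (Fin n)), X k ∈ F k := by
      intro k _
      rw [hXup]
      split_ifs with h
      · rw [h]; exact hj
      · exact hsub k (hxmem k (Finset.mem_erase.mpr ⟨h, Finset.mem_univ k⟩))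
    have hXnotadj : ∀ k ∈ s, ¬ (cyc t).Adj (i + 1) (x k) := by
      intro k hk hadj
      rw [cyc_adj] at hadj
      obtain ⟨hne, h | h⟩ := hadj
      · -- x k = i + 2
        have hmem : x k ∈ S k := hxmem k hk
        have h2 : x k = i + 2 := by rw [h]; ring
        exact Finset.ne_of_mem_erase (h2 ▸ hmem) rfl
      · -- i + 1 = x k + 1, so x k = i
        have hxi : x k = i := by linear_combination -h
        have : x k ∈ S k := hxmem k hk
        exact Finset.ne_of_mem_erase
          (Finset.mem_of_mem_erase (Finset.mem_of_mem_erase (hxi ▸ this))) rfl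
    have hXinj : Set.InjOn X (Finset.univ : Finset (Fin n)) := by
      intro a _ b _ hab
      rw [hXup, hXup] at hab
      split_ifs at hab with h1 h2 h2
      · rw [h1, h2]
      · exfalso
        have hbs : b ∈ s := Finset.mem_erase.mpr ⟨h2, Finset.mem_univ b⟩
        have : x b ∈ S b := hxmem b hbs
        exact Finset.ne_of_mem_erase (Finset.mem_of_mem_erase (hab ▸ this)) rfl
      · exfalso
        have has : a ∈ s := Finset.mem_erase.mpr ⟨h1, Finset.mem_univ a⟩
        have : x a ∈ S a := hxmem a has
        exact Finset.ne_of_mem_erase (Finset.mem_of_mem_erase (hab.symm ▸ this)) rfl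
      · exact hxinj (Finset.mem_coe.mpr (Finset.mem_erase.mpr ⟨h1, Finset.mem_univ a⟩))
          (Finset.mem_coe.mpr (Finset.mem_erase.mpr ⟨h2, Finset.mem_univ b⟩)) hab
    have hXadj : ∀ k ∈ (Finset.univ : Finset (Fin n)), ∀ k' ∈ (Finset.univ : Finset (Fin n)),
        ¬ (cyc t).Adj (X k) (X k') := by
      intro k _ k' _
      rw [hXup, hXup]
      split_ifs with h1 h2 h2
      · exact fun h => (cyc t).loopless.irrefl _ h
      · exact hXnotadj k' (Finset.mem_erase.mpr ⟨h2, Finset.mem_univ k'⟩)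
      · intro h
        exact hXnotadj k (Finset.mem_erase.mpr ⟨h1, Finset.mem_univ k⟩) h.symm
      · exact hxadj k (Finset.mem_erase.mpr ⟨h1, Finset.mem_univ k⟩)
          k' (Finset.mem_erase.mpr ⟨h2, Finset.mem_univ k'⟩)
    have : RainbowIndep (cyc t) F (Finset.univ : Finset (Fin n)).card :=
      rainbow_of_choice Finset.univ X F hXmem hXinj hXadj
    rw [Finset.card_univ, Fintype.card_fin] at this
    exact hno this
  · push_neg at hcov
    have hc : ∀ k ∈ (Finset.univ : Finset (Fin n)), (i + 1) ∉ F k := fun k _ => hcov k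
    have hsize : ∀ k ∈ (Finset.univ : Finset (Fin n)),
        (Finset.univ : Finset (Fin n)).card ≤ (F k).card := by
      intro k _
      rw [Finset.card_univ, Fintype.card_fin, (hF k).1]
    obtain ⟨x, hxmem, hxinj, hxadj⟩ := cutLemma ht2 (i+1) Finset.univ F hc hsize
      (fun k _ => (hF k).2)
    have : RainbowIndep (cyc t) F (Finset.univ : Finset (Fin n)).card :=
      rainbow_of_choice Finset.univ x F hxmem hxinj hxadj
    rw [Finset.card_univ, Fintype.card_fin] at this
    exact hno this

lemma cyc_adj_neg {t : ℕ} (a b : ZMod t) :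
    (cyc t).Adj (-a) (-b) ↔ (cyc t).Adj a b := by
  rw [cyc_adj, cyc_adj]
  constructor
  · rintro ⟨h1, h2 | h2⟩
    · exact ⟨fun h => h1 (by rw [h]), Or.inr (by linear_combination h2)⟩
    · exact ⟨fun h => h1 (by rw [h]), Or.inl (by linear_combination h2)⟩
  · rintro ⟨h1, h2 | h2⟩
    · exact ⟨fun h => h1 (neg_injective h), Or.inr (by linear_combination h2)⟩
    · exact ⟨fun h => h1 (neg_injective h), Or.inl (by linear_combination h2)⟩


/-- If `t ≥ 2n`, `n` independent `n`-sets of `C_t` have no rainbow independent `n`-set,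
and vertex `i` lies in exactly one member `F i₀`, then `i - 2, i + 2 ∈ F i₀`. -/
theorem stmt4 (n t : ℕ) (ht : 2 * n ≤ t)
    (F : Fin n → Finset (ZMod t))
    (hF : ∀ i, (F i).card = n ∧ IsIndep (cyc t) (F i : Set (ZMod t)))
    (hno : ¬ RainbowIndep (cyc t) F n)
    (i : ZMod t) (i₀ : Fin n) (huniq : ∀ j, i ∈ F j ↔ j = i₀) :
    i - 2 ∈ F i₀ ∧ i + 2 ∈ F i₀ := by
  refine ⟨?_, main_plus n t ht F hF hno i i₀ huniq⟩
  -- apply main_plus to the negated family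
  set G : Fin n → Finset (ZMod t) := fun j => (F j).image (fun z => -z) with hG
  have hmemG : ∀ (j : Fin n) (w : ZMod t), w ∈ G j ↔ -w ∈ F j := by
    intro j w
    rw [hG]
    simp only [Finset.mem_image]
    constructor
    · rintro ⟨z, hz, rfl⟩; simpa using hz
    · intro h; exact ⟨-w, h, by ring⟩
  have hGF : ∀ j, (G j).card = n ∧ IsIndep (cyc t) (G j : Set (ZMod t)) := by
    intro j
    constructor
    · rw [hG]
      rw [Finset.card_image_of_injective _ neg_injective]
      exact (hF j).1
    · intro a ha b hb hadj
      simp only [Finset.mem_coe] at ha hb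
      exact (hF j).2 (-a) ((hmemG j a).mp ha) (-b) ((hmemG j b).mp hb)
        ((cyc_adj_neg a b).mpr hadj)
  have hnoG : ¬ RainbowIndep (cyc t) G n := by
    rintro ⟨s, x, hc, hm, hic, hii⟩
    apply hno
    refine ⟨s, fun k => -(x k), hc, ?_, ?_, ?_⟩
    · intro k hk
      exact (hmemG k (x k)).mp (hm k hk)
    · have himg : s.image (fun k => -(x k)) = (s.image x).image (fun z => -z) := by
        rw [Finset.image_image]
        rfl
      rw [himg, Finset.card_image_of_injective _ neg_injective]
      exact hic
    · intro a ha b hb hadj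
      have himg : s.image (fun k => -(x k)) = (s.image x).image (fun z => -z) := by
        rw [Finset.image_image]
        rfl
      rw [himg] at ha hb
      simp only [Finset.coe_image, Set.mem_image, Finset.mem_coe] at ha hb
      obtain ⟨u, hu, rfl⟩ := ha
      obtain ⟨u', hu', rfl⟩ := hb
      exact hii u (Finset.mem_coe.mpr (Finset.mem_image.mpr hu))
        u' (Finset.mem_coe.mpr (Finset.mem_image.mpr hu'))
        ((cyc_adj_neg u u').mp hadj)
  have huniqG : ∀ j, -i ∈ G j ↔ j = i₀ := by
    intro j
    rw [hmemG j (-i), neg_neg]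
    exact huniq j
  have hres : -i + 2 ∈ G i₀ := main_plus n t ht G hGF hnoG (-i) i₀ huniqG
  have : -(-i + 2) ∈ F i₀ := (hmemG i₀ (-i + 2)).mp hres
  rwa [show -(-i + 2) = i - 2 by ring] at this
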